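/- For the paraboloid of revolution z = a(u² + v²) with a > 0 (a translation surface with f(u) = au², g(v) = av²), the mean curvature H and Gaussian curvature K are both positive everywhere and satisfy 8aH² = √K·(2a + √K)². -/

import Mathlib

/-- For the paraboloid of revolution `z = a(u² + v²)` with `a > 0` (so `α(u) = 2au`,
`β(v) = 2av`), the mean curvature `H` and Gaussian curvature `K` are both positive
everywhere and satisfy `8aH² = √K (2a + √K)²`. -/
theorem stmt_3 (a : ℝ) (ha : 0 < a) (u v : ℝ) :
    let α : ℝ → ℝ := fun u => 2 * a * u
    let β : ℝ → ℝ := fun v => 2 * a * v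
    let H : ℝ := ((1 + β v ^ 2) * deriv α u + (1 + α u ^ 2) * deriv β v) /
      (2 * (1 + α u ^ 2 + β v ^ 2) ^ ((3 : ℝ) / 2))
    let K : ℝ := deriv α u * deriv β v / (1 + α u ^ 2 + β v ^ 2) ^ 2
    0 < H ∧ 0 < K ∧ 8 * a * H ^ 2 = Real.sqrt K * (2 * a + Real.sqrt K) ^ 2 := by
  intro α β H K
  have hdα : deriv α u = 2 * a := by
    have := ((hasDerivAt_id u).const_mul (2 * a)).deriv
    rw [mul_one] at this
    exact this
  have hdβ : deriv β v = 2 * a := by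
    have := ((hasDerivAt_id v).const_mul (2 * a)).deriv
    rw [mul_one] at this
    exact this
  set w : ℝ := 1 + (2 * a * u) ^ 2 + (2 * a * v) ^ 2 with hwdef
  have hw : 0 < w := by positivity
  clear_value w
  have hαu : α u = 2 * a * u := rfl
  have hβv : β v = 2 * a * v := rfl
  have hHval : H = 2 * a * (1 + w) / (2 * w ^ ((3:ℝ)/2)) := by
    show ((1 + β v ^ 2) * deriv α u + (1 + α u ^ 2) * deriv β v) /
      (2 * (1 + α u ^ 2 + β v ^ 2) ^ ((3 : ℝ) / 2)) = _
    rw [hdα, hdβ, hαu, hβv, hwdef]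
    ring_nf
  have hKval : K = (2 * a / w) ^ 2 := by
    show deriv α u * deriv β v / (1 + α u ^ 2 + β v ^ 2) ^ 2 = _
    rw [hdα, hdβ, hαu, hβv, ← hwdef]
    field_simp
  have hrpow : 0 < w ^ ((3:ℝ)/2) := Real.rpow_pos_of_pos hw _
  have h32 : (w ^ ((3:ℝ)/2)) ^ 2 = w ^ 3 := by
    rw [← Real.rpow_natCast (w ^ ((3:ℝ)/2)) 2, ← Real.rpow_mul hw.le]
    norm_num
  have hsqrt : Real.sqrt K = 2 * a / w := by
    rw [hKval, Real.sqrt_sq (by positivity)]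
  refine ⟨?_, ?_, ?_⟩
  · rw [hHval]; positivity
  · rw [hKval]; positivity
  · rw [hHval, hsqrt]
    rw [div_pow, mul_pow]
    field_simp
    rw [h32]
    ring
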